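/- Let b, m, u > 0 with u > 4bm and set v_+ = (1 + sqrt(1 - 4bm/u))/(2b), v_- = (1 - sqrt(1 - 4bm/u))/(2b), k = v_+ sqrt(ub)/(2 sqrt 2), and c = -(sqrt(2bu)/2)(v_+ - 2v_-). Then v(ξ) = (v_+/2)(1 + tanh(kξ)) solves v'' + c v' - mv + (1-bv)uv^2 = 0 on ℝ, with v(ξ) → 0 as ξ → -∞ and v(ξ) → v_+ as ξ → +∞. -/

import Mathlib

open Real Filter


lemma tanh_hasDerivAt (x : ℝ) : HasDerivAt Real.tanh (1 - Real.tanh x ^ 2) x := by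
  have hc : Real.cosh x ≠ 0 := (Real.cosh_pos x).ne'
  have h := (Real.hasDerivAt_sinh x).div (Real.hasDerivAt_cosh x) hc
  have he : Real.tanh = fun x => Real.sinh x / Real.cosh x := by
    funext y; exact Real.tanh_eq_sinh_div_cosh y
  rw [he]
  refine h.congr_deriv ?_
  have h1 : Real.cosh x ^ 2 - Real.sinh x ^ 2 = 1 := Real.cosh_sq_sub_sinh_sq x
  beta_reduce; field_simp

lemma tanh_eq2 (x : ℝ) : Real.tanh x = (Real.exp (2*x) - 1) / (Real.exp (2*x) + 1) := by
  rw [Real.tanh_eq_sinh_div_cosh, Real.sinh_eq, Real.cosh_eq]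
  have h2 : Real.exp (2*x) = Real.exp x * Real.exp x := by rw [two_mul, Real.exp_add]
  have h3 : Real.exp (-x) = 1 / Real.exp x := by rw [Real.exp_neg]; ring
  have h4 : Real.exp x ≠ 0 := Real.exp_ne_zero x
  have h5 : Real.exp (2*x) + 1 ≠ 0 := by positivity
  rw [h2, h3]
  field_simp

lemma tanh_atBot : Tendsto Real.tanh atBot (nhds (-1)) := by
  have h1 : Tendsto (fun x : ℝ => Real.exp (2*x)) atBot (nhds 0) := by
    apply Real.tendsto_exp_atBot.comp
    exact (tendsto_id (α := ℝ)).const_mul_atBot two_pos |>.comp tendsto_id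
  have h2 : ContinuousAt (fun t : ℝ => (t - 1) / (t + 1)) 0 := by
    apply ContinuousAt.div (by fun_prop) (by fun_prop); norm_num
  have h3 := (h2.tendsto).comp h1
  simp only [Function.comp_def] at h3 ⊢
  have : ((0:ℝ) - 1) / (0 + 1) = -1 := by norm_num
  rw [this] at h3
  have he : Real.tanh = fun x : ℝ => (Real.exp (2*x) - 1) / (Real.exp (2*x) + 1) := funext tanh_eq2
  rw [he]
  exact h3

lemma tanh_atTop : Tendsto Real.tanh atTop (nhds 1) := by
  have h1 : Tendsto (fun x : ℝ => Real.exp (2*x) + 1) atTop atTop := by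
    apply tendsto_atTop_add_const_right
    exact Real.tendsto_exp_atTop.comp ((tendsto_id (α := ℝ)).const_mul_atTop two_pos)
  have h2 : Tendsto (fun x : ℝ => 1 - 2 / (Real.exp (2*x) + 1)) atTop (nhds (1 - 0)) :=
    tendsto_const_nhds.sub (tendsto_const_nhds.div_atTop h1)
  rw [sub_zero] at h2
  convert h2 using 2 with x
  rw [tanh_eq2]
  have h5 : Real.exp (2*x) + 1 ≠ 0 := by positivity
  field_simp
  ring


/-- The explicit front `φ_†`: `v(ξ) = (v₊/2)(1 + tanh(kξ))` solves the layer ODE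
`v'' + c v' - m v + (1-bv) u v² = 0` with speed `c = c*_†(u)`, connecting `0` at
`-∞` to `v₊` at `+∞`. -/
theorem stmt_5 (b m u : ℝ) (hb : 0 < b) (hm : 0 < m) (hu : 4 * b * m < u) :
    let vp : ℝ := (1 + Real.sqrt (1 - 4 * b * m / u)) / (2 * b)
    let vm : ℝ := (1 - Real.sqrt (1 - 4 * b * m / u)) / (2 * b)
    let k : ℝ := vp * Real.sqrt (u * b) / (2 * Real.sqrt 2)
    let c : ℝ := -(Real.sqrt (2 * b * u) / 2 * (vp - 2 * vm))
    let v : ℝ → ℝ := fun ξ => vp / 2 * (1 + Real.tanh (k * ξ))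
    (∀ ξ : ℝ, deriv (deriv v) ξ + c * deriv v ξ - m * v ξ
        + (1 - b * v ξ) * u * (v ξ) ^ 2 = 0) ∧
    Filter.Tendsto v Filter.atBot (nhds 0) ∧
    Filter.Tendsto v Filter.atTop (nhds vp) := by
  intro vp vm k c v
  have hu0 : 0 < u := lt_trans (by positivity) hu
  set s : ℝ := Real.sqrt (1 - 4 * b * m / u) with hs_def
  have hsnn : (0:ℝ) ≤ 1 - 4 * b * m / u := by
    rw [sub_nonneg, div_le_one hu0]; linarith
  have hs2 : s ^ 2 = 1 - 4 * b * m / u := Real.sq_sqrt hsnn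
  have hs0 : 0 ≤ s := Real.sqrt_nonneg _
  have hvp : vp = (1 + s) / (2 * b) := rfl
  have hvm : vm = (1 - s) / (2 * b) := rfl
  have hk : k = vp * Real.sqrt (u * b) / (2 * Real.sqrt 2) := rfl
  have hc : c = -(Real.sqrt (2 * b * u) / 2 * (vp - 2 * vm)) := rfl
  have hvp0 : 0 < vp := by rw [hvp]; positivity
  have hq0 : (0:ℝ) < Real.sqrt 2 := Real.sqrt_pos.mpr two_pos
  have hq2 : Real.sqrt 2 ^ 2 = 2 := Real.sq_sqrt (by norm_num)
  have hr2 : Real.sqrt (u * b) ^ 2 = u * b := Real.sq_sqrt (by positivity)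
  have hr0 : 0 < Real.sqrt (u * b) := Real.sqrt_pos.mpr (by positivity)
  have hp : Real.sqrt (2 * b * u) = Real.sqrt 2 * Real.sqrt (u * b) := by
    rw [show (2 * b * u) = 2 * (u * b) by ring, Real.sqrt_mul (by norm_num : (0:ℝ) ≤ 2)]
  have hk0 : 0 < k := by rw [hk]; positivity
  -- key algebraic identities
  have hk2 : k ^ 2 = u * b * vp ^ 2 / 8 := by
    rw [hk, div_pow, mul_pow, mul_pow, hr2, hq2]; ring
  have hrr : Real.sqrt (u * b) * Real.sqrt (u * b) = u * b :=
    Real.mul_self_sqrt (by positivity)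
  have hs2' : u * s ^ 2 = u - 4 * b * m := by
    rw [hs2]; field_simp
  have hck : c * k = -(u * b * vp * (vp - 2 * vm)) / 4 := by
    have e : c * k = -(vp * (vp - 2 * vm) * (Real.sqrt (u * b) * Real.sqrt (u * b))
        * (Real.sqrt 2 / Real.sqrt 2) / 4) := by
      rw [hc, hk, hp]; ring
    rw [e, hrr, div_self hq0.ne']; ring
  have hm' : m = u * b * vp * vm := by
    rw [hvp, hvm]
    field_simp
    linear_combination hs2'
  have hu' : u = u * b * (vp + vm) := by
    rw [hvp, hvm]; field_simp; ring
  -- derivatives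
  have hd1 : ∀ ξ : ℝ, HasDerivAt v (vp / 2 * k * (1 - Real.tanh (k * ξ) ^ 2)) ξ := by
    intro ξ
    have h0 : HasDerivAt (fun ξ : ℝ => k * ξ) k ξ := by
      simpa using (hasDerivAt_id ξ).const_mul k
    have h1 : HasDerivAt (fun ξ : ℝ => Real.tanh (k * ξ))
        ((1 - Real.tanh (k * ξ) ^ 2) * k) ξ := (tanh_hasDerivAt (k * ξ)).comp ξ h0
    have h2 := ((h1.const_add 1).const_mul (vp / 2))
    refine h2.congr_deriv ?_
    ring
  have hdv : deriv v = fun ξ => vp / 2 * k * (1 - Real.tanh (k * ξ) ^ 2) :=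
    funext fun ξ => (hd1 ξ).deriv
  have hd2 : ∀ ξ : ℝ, HasDerivAt (fun ξ => vp / 2 * k * (1 - Real.tanh (k * ξ) ^ 2))
      (-(vp * k ^ 2 * Real.tanh (k * ξ) * (1 - Real.tanh (k * ξ) ^ 2))) ξ := by
    intro ξ
    have h0 : HasDerivAt (fun ξ : ℝ => k * ξ) k ξ := by
      simpa using (hasDerivAt_id ξ).const_mul k
    have h1 : HasDerivAt (fun ξ : ℝ => Real.tanh (k * ξ))
        ((1 - Real.tanh (k * ξ) ^ 2) * k) ξ := (tanh_hasDerivAt (k * ξ)).comp ξ h0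
    have h2 := ((h1.pow 2).const_sub 1).const_mul (vp / 2 * k)
    refine h2.congr_deriv ?_
    ring
  refine ⟨?_, ?_, ?_⟩
  · intro ξ
    have e1 : deriv (deriv v) ξ
        = -(vp * k ^ 2 * Real.tanh (k * ξ) * (1 - Real.tanh (k * ξ) ^ 2)) := by
      rw [hdv]; exact (hd2 ξ).deriv
    have e2 : deriv v ξ = vp / 2 * k * (1 - Real.tanh (k * ξ) ^ 2) := (hd1 ξ).deriv
    have e3 : v ξ = vp / 2 * (1 + Real.tanh (k * ξ)) := rfl
    rw [e1, e2, e3]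
    set T := Real.tanh (k * ξ)
    linear_combination (-(vp * T * (1 - T ^ 2))) * hk2 + (vp / 2 * (1 - T ^ 2)) * hck
      + (-(vp / 2 * (1 + T))) * hm' + (vp ^ 2 / 4 * (1 + T) ^ 2) * hu'
  · have h1 : Tendsto (fun ξ : ℝ => k * ξ) atBot atBot :=
      (tendsto_id (α := ℝ)).const_mul_atBot hk0
    have h2 : Tendsto (fun ξ : ℝ => Real.tanh (k * ξ)) atBot (nhds (-1)) :=
      tanh_atBot.comp h1
    have h3 := ((tendsto_const_nhds (x := (1:ℝ))).add h2).const_mul (vp / 2)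
    convert h3 using 2
    norm_num
  · have h1 : Tendsto (fun ξ : ℝ => k * ξ) atTop atTop :=
      (tendsto_id (α := ℝ)).const_mul_atTop hk0
    have h2 : Tendsto (fun ξ : ℝ => Real.tanh (k * ξ)) atTop (nhds 1) :=
      tanh_atTop.comp h1
    have h3 := ((tendsto_const_nhds (x := (1:ℝ))).add h2).const_mul (vp / 2)
    convert h3 using 2
    ring
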